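/- Let ε ∈ ℝ^M be a random vector and f: ℝ^D × ℝ^M → ℝ be measurable in ε. Suppose that for every x ∈ ℝ^D the distribution of f(x;ε) is symmetric around its median center m_f(x). Then the additivity of the median holds: for all x, y ∈ ℝ^D, the median center of f(x;ε) − f(y;ε'), where ε' is an i.i.d. copy of ε, equals m_f(x) − m_f(y). -/

import Mathlib

open MeasureTheory ProbabilityTheory
open Set Filter

/-- The center of the median of a real random variable `Y` under measure `μ`:
`(inf {t : F(t) > 1/2} + sup {t : F(t) < 1/2}) / 2` where `F` is the CDF of `Y`. -/
noncomputable def medCenter {Ω : Type*} [MeasurableSpace Ω] (μ : Measure Ω) (Y : Ω → ℝ) : ℝ :=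
  (sInf {t : ℝ | 1 / 2 < (μ {ω | Y ω ≤ t}).toReal} +
    sSup {t : ℝ | (μ {ω | Y ω ≤ t}).toReal < 1 / 2}) / 2

lemma medCenter_congr_law {Ω Ω' : Type*} [MeasurableSpace Ω] [MeasurableSpace Ω']
    (μ : Measure Ω) (ν : Measure Ω') (Z : Ω → ℝ) (W : Ω' → ℝ)
    (hZ : Measurable Z) (hW : Measurable W) (h : μ.map Z = ν.map W) :
    medCenter μ Z = medCenter ν W := by
  have key : ∀ t : ℝ, μ {ω | Z ω ≤ t} = ν {ω | W ω ≤ t} := by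
    intro t
    have h1 : μ {ω | Z ω ≤ t} = (μ.map Z) (Iic t) := by
      rw [Measure.map_apply hZ measurableSet_Iic]; rfl
    have h2 : ν {ω | W ω ≤ t} = (ν.map W) (Iic t) := by
      rw [Measure.map_apply hW measurableSet_Iic]; rfl
    rw [h1, h2, h]
  unfold medCenter
  simp only [key]

lemma medCenter_of_symm {Ω : Type*} [MeasurableSpace Ω] (μ : Measure Ω)
    [IsProbabilityMeasure μ] (Z : Ω → ℝ) (hZ : Measurable Z) (c : ℝ)
    (h : μ.map (fun ω => Z ω - c) = μ.map (fun ω => c - Z ω)) :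
    medCenter μ Z = c := by
  set F : ℝ → ℝ := fun t => (μ {ω | Z ω ≤ t}).toReal with hF
  set G : ℝ → ℝ := fun t => (μ {ω | Z ω < t}).toReal with hG
  have hmeas_lt : ∀ t : ℝ, MeasurableSet {ω | Z ω < t} := fun t =>
    hZ measurableSet_Iio
  have key : ∀ t : ℝ, F t + G (2 * c - t) = 1 := by
    intro t
    have hm1 : Measurable (fun ω => Z ω - c) := hZ.sub_const c
    have hm2 : Measurable (fun ω => c - Z ω) := measurable_const.sub hZ
    have h1 : μ ((fun ω => Z ω - c) ⁻¹' Iic (t - c)) =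
        μ ((fun ω => c - Z ω) ⁻¹' Iic (t - c)) := by
      rw [← Measure.map_apply hm1 measurableSet_Iic,
        ← Measure.map_apply hm2 measurableSet_Iic, h]
    have e1 : (fun ω => Z ω - c) ⁻¹' Iic (t - c) = {ω | Z ω ≤ t} := by
      ext ω
      simp only [Set.mem_preimage, Set.mem_Iic, Set.mem_setOf_eq]
      constructor <;> intro <;> linarith
    have e2 : (fun ω => c - Z ω) ⁻¹' Iic (t - c) = {ω | Z ω < 2 * c - t}ᶜ := by
      ext ω
      simp only [Set.mem_preimage, Set.mem_Iic, Set.mem_compl_iff, Set.mem_setOf_eq, not_lt]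
      constructor <;> intro <;> linarith
    rw [e1, e2] at h1
    have h2 : μ ({ω | Z ω < 2 * c - t}ᶜ) = 1 - μ {ω | Z ω < 2 * c - t} := by
      rw [measure_compl (hmeas_lt _) (measure_ne_top _ _), measure_univ]
    have hle : μ {ω | Z ω < 2 * c - t} ≤ 1 := prob_le_one
    have h3 : (μ {ω | Z ω ≤ t}).toReal = 1 - (μ {ω | Z ω < 2 * c - t}).toReal := by
      rw [h1, h2, ENNReal.toReal_sub_of_le hle (by simp), ENNReal.toReal_one]
    show (μ {ω | Z ω ≤ t}).toReal + (μ {ω | Z ω < 2 * c - t}).toReal = 1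
    linarith
  have hGF : ∀ t : ℝ, G t ≤ F t := fun t =>
    ENNReal.toReal_mono (measure_ne_top _ _)
      (measure_mono (fun ω (hω : Z ω < t) => le_of_lt hω))
  have hFmono : Monotone F := fun s t hst =>
    ENNReal.toReal_mono (measure_ne_top _ _)
      (measure_mono (fun ω (hω : Z ω ≤ s) => le_trans hω hst))
  set A : Set ℝ := {t | 1 / 2 < F t} with hA
  set B : Set ℝ := {t | F t < 1 / 2} with hB
  set C : Set ℝ := {t | G t < 1 / 2} with hC
  have hprob : IsProbabilityMeasure (μ.map Z) := Measure.isProbabilityMeasure_map hZ.aemeasurable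
  have hcdf : ∀ t : ℝ, cdf (μ.map Z) t = F t := by
    intro t
    rw [cdf_eq_real, measureReal_def, Measure.map_apply hZ measurableSet_Iic]
    rfl
  obtain ⟨t₀, ht₀'⟩ :=
    ((tendsto_cdf_atTop (μ.map Z)).eventually
      (eventually_gt_nhds (show (1:ℝ)/2 < 1 by norm_num))).exists
  have ht₀ : t₀ ∈ A := by rw [hA, Set.mem_setOf_eq, ← hcdf]; exact ht₀'
  obtain ⟨u₀, hu₀'⟩ :=
    ((tendsto_cdf_atBot (μ.map Z)).eventually
      (eventually_lt_nhds (show (0:ℝ) < 1/2 by norm_num))).exists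
  have hu₀ : u₀ ∈ B := by rw [hB, Set.mem_setOf_eq, ← hcdf]; exact hu₀'
  have hBne : B.Nonempty := ⟨u₀, hu₀⟩
  have hCne : C.Nonempty := ⟨u₀, lt_of_le_of_lt (hGF u₀) hu₀⟩
  have hCbdd : ∀ t ∈ A, ∀ u ∈ C, u ≤ t := by
    intro t ht u hu
    by_contra hlt
    push_neg at hlt
    have h1 : F t ≤ G u := ENNReal.toReal_mono (measure_ne_top _ _)
      (measure_mono (fun ω (hω : Z ω ≤ t) => lt_of_le_of_lt hω hlt))
    have h2 : G u < 1/2 := hu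
    have h3 : 1/2 < F t := ht
    linarith
  have hCbddAbove : BddAbove C := ⟨t₀, fun u hu => hCbdd t₀ ht₀ u hu⟩
  have hBbddAbove : BddAbove B := by
    refine ⟨t₀, fun u hu => ?_⟩
    by_contra hlt
    push_neg at hlt
    have h1 : 1/2 < F u := lt_of_lt_of_le ht₀ (hFmono (le_of_lt hlt))
    have h2 : F u < 1/2 := hu
    linarith
  have hAbddBelow : BddBelow A := by
    refine ⟨u₀, fun t ht => ?_⟩
    by_contra hlt
    push_neg at hlt
    have h1 : 1/2 < F u₀ := lt_of_lt_of_le ht (hFmono (le_of_lt hlt))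
    have h2 : F u₀ < 1/2 := hu₀
    linarith
  have hBC : B ⊆ C := fun u hu => lt_of_le_of_lt (hGF u) hu
  have hsup : sSup C = sSup B := by
    apply le_antisymm
    · apply csSup_le hCne
      intro u hu
      by_contra hlt
      push_neg at hlt
      obtain ⟨v, hv1, hv2⟩ := exists_between hlt
      have hvB : v ∈ B := by
        have h1 : F v ≤ G u := ENNReal.toReal_mono (measure_ne_top _ _)
          (measure_mono (fun ω (hω : Z ω ≤ v) => lt_of_le_of_lt hω hv2))
        have h2 : G u < 1/2 := hu
        show F v < 1/2
        linarith
      exact absurd (le_csSup hBbddAbove hvB) (not_le.mpr hv1)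
    · exact csSup_le_csSup hCbddAbove hBne hBC
  have hAC : ∀ t : ℝ, t ∈ A ↔ (2 * c - t) ∈ C := by
    intro t
    have hk := key t
    constructor
    · intro ht
      have h1 : 1/2 < F t := ht
      show G (2 * c - t) < 1/2
      linarith
    · intro ht
      have h1 : G (2 * c - t) < 1/2 := ht
      show 1/2 < F t
      linarith
  have hinf : sInf A = 2 * c - sSup C := by
    apply le_antisymm
    · have h1 : ∀ u ∈ C, u ≤ 2 * c - sInf A := by
        intro u hu
        have htA : (2 * c - u) ∈ A := by
          rw [hAC]
          simpa using hu
        have := csInf_le hAbddBelow htA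
        linarith
      have := csSup_le hCne h1
      linarith
    · apply le_csInf ⟨t₀, ht₀⟩
      intro t ht
      have h1 : (2 * c - t) ∈ C := (hAC t).mp ht
      have := le_csSup hCbddAbove h1
      linarith
  show (sInf A + sSup B) / 2 = c
  rw [← hsup, hinf]; ring

/-- If the distribution of `f(x; ε)` is symmetric around its median center for all `x`,
then the median is additive: the median center of `f(x; ε) - f(y; ε')` (for `ε'` an
i.i.d. copy of `ε`) is `m_f(x) - m_f(y)` (Proposition 2 of the paper). -/
theorem statement8 {Ω : Type*} [MeasurableSpace Ω] (μ : Measure Ω) [IsProbabilityMeasure μ]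
    (D M : ℕ) (f : (Fin D → ℝ) → (Fin M → ℝ) → ℝ) (hf : ∀ x, Measurable (f x))
    (ε ε' : Ω → Fin M → ℝ) (hε : Measurable ε) (hε' : Measurable ε')
    (hid : μ.map ε = μ.map ε') (hindep : IndepFun ε ε' μ)
    (hsym : ∀ x : Fin D → ℝ,
      μ.map (fun ω => f x (ε ω) - medCenter μ (fun ω' => f x (ε ω'))) =
        μ.map (fun ω => medCenter μ (fun ω' => f x (ε ω')) - f x (ε ω))) :
    ∀ x y : Fin D → ℝ,
      medCenter μ (fun ω => f x (ε ω) - f y (ε' ω)) =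
        medCenter μ (fun ω => f x (ε ω)) - medCenter μ (fun ω => f y (ε ω)) := by
  intro x y
  set mx := medCenter μ (fun ω => f x (ε ω)) with hmx
  set my := medCenter μ (fun ω => f y (ε ω)) with hmy
  have hX : Measurable (fun ω => f x (ε ω)) := (hf x).comp hε
  have hY : Measurable (fun ω => f y (ε ω)) := (hf y).comp hε
  have hY' : Measurable (fun ω => f y (ε' ω)) := (hf y).comp hε'
  set A : Ω → ℝ := fun ω => f x (ε ω) - mx with hAdef
  set B : Ω → ℝ := fun ω => f y (ε' ω) - my with hBdef
  set nA : Ω → ℝ := fun ω => mx - f x (ε ω) with hnAdef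
  set nB : Ω → ℝ := fun ω => my - f y (ε' ω) with hnBdef
  have hAm : Measurable A := hX.sub_const mx
  have hBm : Measurable B := hY'.sub_const my
  have hnAm : Measurable nA := measurable_const.sub hX
  have hnBm : Measurable nB := measurable_const.sub hY'
  -- symmetry of A
  have hA : μ.map A = μ.map nA := hsym x
  -- transfer symmetry of ε-version to ε'-version
  have gm1 : Measurable (fun v : Fin M → ℝ => f y v - my) := (hf y).sub_const my
  have gm2 : Measurable (fun v : Fin M → ℝ => my - f y v) := measurable_const.sub (hf y)
  have t1 : μ.map B = μ.map (fun ω => f y (ε ω) - my) := by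
    calc μ.map B = (μ.map ε').map (fun v => f y v - my) := (Measure.map_map gm1 hε').symm
      _ = (μ.map ε).map (fun v => f y v - my) := by rw [hid]
      _ = μ.map (fun ω => f y (ε ω) - my) := Measure.map_map gm1 hε
  have t2 : μ.map nB = μ.map (fun ω => my - f y (ε ω)) := by
    calc μ.map nB = (μ.map ε').map (fun v => my - f y v) := (Measure.map_map gm2 hε').symm
      _ = (μ.map ε).map (fun v => my - f y v) := by rw [hid]
      _ = μ.map (fun ω => my - f y (ε ω)) := Measure.map_map gm2 hε
  have hB : μ.map B = μ.map nB := by rw [t1, t2]; exact hsym y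
  -- independence
  have hAB : IndepFun A B μ := hindep.comp ((hf x).sub_const mx) ((hf y).sub_const my)
  have hnAB : IndepFun nA nB μ := hindep.comp (measurable_const.sub (hf x))
    (measurable_const.sub (hf y))
  have msub : Measurable (fun p : ℝ × ℝ => p.1 - p.2) := measurable_fst.sub measurable_snd
  -- the law of A - B equals the law of nA - nB
  have chain : μ.map (fun ω => A ω - B ω) = μ.map (fun ω => nA ω - nB ω) := by
    calc μ.map (fun ω => A ω - B ω)
        = (μ.map (fun ω => (A ω, B ω))).map (fun p : ℝ × ℝ => p.1 - p.2) :=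
          (Measure.map_map msub (hAm.prodMk hBm)).symm
      _ = ((μ.map A).prod (μ.map B)).map (fun p : ℝ × ℝ => p.1 - p.2) := by
          rw [(indepFun_iff_map_prod_eq_prod_map_map hAm.aemeasurable hBm.aemeasurable).mp hAB]
      _ = ((μ.map nA).prod (μ.map nB)).map (fun p : ℝ × ℝ => p.1 - p.2) := by
          rw [hA, hB]
      _ = (μ.map (fun ω => (nA ω, nB ω))).map (fun p : ℝ × ℝ => p.1 - p.2) := by
          rw [(indepFun_iff_map_prod_eq_prod_map_map hnAm.aemeasurable
            hnBm.aemeasurable).mp hnAB]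
      _ = μ.map (fun ω => nA ω - nB ω) := Measure.map_map msub (hnAm.prodMk hnBm)
  -- conclude via medCenter_of_symm
  apply medCenter_of_symm μ _ (hX.sub hY') (mx - my)
  have e1 : (fun ω => (f x (ε ω) - f y (ε' ω)) - (mx - my)) = (fun ω => A ω - B ω) := by
    funext ω; simp only [hAdef, hBdef]; ring
  have e2 : (fun ω => (mx - my) - (f x (ε ω) - f y (ε' ω))) = (fun ω => nA ω - nB ω) := by
    funext ω; simp only [hnAdef, hnBdef]; ring
  change Measure.map (fun ω => (f x (ε ω) - f y (ε' ω)) - (mx - my)) μ =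
    Measure.map (fun ω => (mx - my) - (f x (ε ω) - f y (ε' ω))) μ
  rw [e1, e2]
  exact chain
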